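/- Every k-tree has star-arboricity at most k+1; that is, its edge set can be partitioned into k+1 star-forests. -/

import Mathlib

/-- A `k`-tree, defined via a construction ordering: the first `k+1` vertices form a
clique, and each later vertex's neighbourhood among earlier vertices is a `k`-clique. -/
def IsKTree {V : Type*} [Finite V] (k : ℕ) (G : SimpleGraph V) : Prop :=
  k + 1 ≤ Nat.card V ∧
  ∃ σ : Fin (Nat.card V) ≃ V,
    ∀ i : Fin (Nat.card V),
      (((i : ℕ) ≤ k) →
        {u | G.Adj (σ i) u ∧ ((σ.symm u : Fin (Nat.card V)) : ℕ) < (i : ℕ)} =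
          {u | ((σ.symm u : Fin (Nat.card V)) : ℕ) < (i : ℕ)}) ∧
      (k < (i : ℕ) →
        ({u | G.Adj (σ i) u ∧ ((σ.symm u : Fin (Nat.card V)) : ℕ) < (i : ℕ)}.ncard = k ∧
          G.IsClique {u | G.Adj (σ i) u ∧ ((σ.symm u : Fin (Nat.card V)) : ℕ) < (i : ℕ)}))

/-- A star forest: every vertex of degree at least 2 has only degree-1 neighbours,
so every connected component is a star. -/
def IsStarForest {V : Type*} (H : SimpleGraph V) : Prop :=
  ∀ v, 2 ≤ (H.neighborSet v).ncard → ∀ u, H.Adj v u → (H.neighborSet u).ncard = 1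

/-- The edge set of `G` can be partitioned into `t` star forests. -/
def HasStarArboricityAtMost {V : Type*} (t : ℕ) (G : SimpleGraph V) : Prop :=
  ∃ H : Fin t → SimpleGraph V, (∀ i, IsStarForest (H i)) ∧ (∀ i, H i ≤ G) ∧
    ∀ u v, G.Adj u v → ∃! i, (H i).Adj u v

lemma subsingleton_ncard_le_one {α : Type*} (s : Set α) (h : s.Subsingleton) : s.ncard ≤ 1 := by
  refine (Set.ncard_le_one_iff_eq h.finite).mpr ?_
  rcases s.eq_empty_or_nonempty with h'|⟨a,ha⟩
  · exact Or.inl h'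
  · exact Or.inr ⟨a, h.eq_singleton_of_mem ha⟩

noncomputable def pickNew (k : ℕ) (s : Finset (Fin (k+1))) : Fin (k+1) :=
  if h : (Finset.univ \ s).Nonempty then h.choose else 0

lemma pickNew_not_mem (k : ℕ) (s : Finset (Fin (k+1))) (h : s.card ≤ k) : pickNew k s ∉ s := by
  have hne : (Finset.univ \ s).Nonempty := by
    rw [Finset.sdiff_nonempty]
    intro hsub
    have := Finset.card_le_card hsub
    simp [Finset.card_univ] at this
    omega
  rw [pickNew, dif_pos hne]
  exact (Finset.mem_sdiff.mp hne.choose_spec).2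

noncomputable def greedy (k : ℕ) (B : ℕ → Finset ℕ) : ℕ → Fin (k+1)
  | i => pickNew k (((B i).filter (· < i)).attach.image
      (fun j => greedy k B j.1))
  decreasing_by
    simpa using (Finset.mem_filter.mp j.2).2

lemma greedy_spec (k : ℕ) (B : ℕ → Finset ℕ) (hB : ∀ i, (B i).card ≤ k)
    (i j : ℕ) (hj : j ∈ B i) (hlt : j < i) : greedy k B j ≠ greedy k B i := by
  have hcard : ((((B i).filter (· < i)).attach.image (fun j => greedy k B j.1))).card ≤ k := by
    refine le_trans Finset.card_image_le ?_
    rw [Finset.card_attach]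
    exact le_trans (Finset.card_filter_le _ _) (hB i)
  have hnot := pickNew_not_mem k _ hcard
  intro heq
  apply hnot
  rw [show greedy k B i = pickNew k (((B i).filter (· < i)).attach.image (fun j => greedy k B j.1)) from by rw [greedy]] at heq
  rw [← heq]
  exact Finset.mem_image.mpr ⟨⟨j, Finset.mem_filter.mpr ⟨hj, by simpa using hlt⟩⟩, Finset.mem_attach _ _, rfl⟩


/-- Every `k`-tree has star-arboricity at most `k+1`. -/
theorem ktree_starArboricity {V : Type*} [Finite V] (k : ℕ) (hk : 1 ≤ k)
    (G : SimpleGraph V) (h : IsKTree k G) :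
    HasStarArboricityAtMost (k + 1) G := by
  classical
  obtain ⟨hcardV, σ, hσ⟩ := h
  have : Fintype V := Fintype.ofFinite V
  let rk : V → ℕ := fun v => ((σ.symm v : Fin (Nat.card V)) : ℕ)
  have rk_lt : ∀ v, rk v < Nat.card V := fun v => (σ.symm v).2
  have rk_inj : Function.Injective rk := by
    intro a b hab
    have : σ.symm a = σ.symm b := Fin.ext hab
    simpa using congrArg σ this
  have hσrk : ∀ v, σ ⟨rk v, rk_lt v⟩ = v := by
    intro v
    simp [rk, Fin.eta]
  -- hypothesis in terms of vertices
  have hsmall : ∀ v, rk v ≤ k →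
      {u | G.Adj v u ∧ rk u < rk v} = {u | rk u < rk v} := by
    intro v hv
    have := (hσ (σ.symm v)).1 hv
    rw [Equiv.apply_symm_apply] at this
    exact this
  have hbig : ∀ v, k < rk v →
      ({u | G.Adj v u ∧ rk u < rk v}.ncard = k ∧ G.IsClique {u | G.Adj v u ∧ rk u < rk v}) := by
    intro v hv
    have := (hσ (σ.symm v)).2 hv
    rw [Equiv.apply_symm_apply] at this
    exact this
  -- back-neighbourhoods are cliques
  have hclique : ∀ v, G.IsClique {u | G.Adj v u ∧ rk u < rk v} := by
    intro v
    by_cases hv : rk v ≤ k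
    · rw [hsmall v hv]
      intro a ha b hb hab
      simp only [Set.mem_setOf_eq] at ha hb
      rcases lt_trichotomy (rk a) (rk b) with h1 | h1 | h1
      · have hb' : rk b ≤ k := by omega
        have heq := hsmall b hb'
        have : a ∈ {u | G.Adj b u ∧ rk u < rk b} := by rw [heq]; exact h1
        exact this.1.symm
      · exact absurd (rk_inj h1) hab
      · have ha' : rk a ≤ k := by omega
        have heq := hsmall a ha'
        have : b ∈ {u | G.Adj a u ∧ rk u < rk a} := by rw [heq]; exact h1
        exact this.1
    · exact (hbig v (by omega)).2
  -- finset version of back neighbourhoods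
  let Nv : V → Finset V := fun v => Finset.univ.filter (fun u => G.Adj v u ∧ rk u < rk v)
  have hNvmem : ∀ v u, u ∈ Nv v ↔ (G.Adj v u ∧ rk u < rk v) := by
    intro v u; simp [Nv]
  have hNvcoe : ∀ v, (↑(Nv v) : Set V) = {u | G.Adj v u ∧ rk u < rk v} := by
    intro v; ext u; simp [Nv]
  let B' : ℕ → Finset ℕ := fun i => if h : i < Nat.card V then (Nv (σ ⟨i, h⟩)).image rk else ∅
  have hB'card : ∀ i, (B' i).card ≤ k := by
    intro i
    by_cases hi : i < Nat.card V
    · simp only [B', dif_pos hi]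
      set v := σ ⟨i, hi⟩ with hv
      have hrkv : rk v = i := by simp [rk, hv]
      by_cases hik : i ≤ k
      · have hsub : (Nv v).image rk ⊆ Finset.range i := by
          intro x hx
          obtain ⟨u, hu, rfl⟩ := Finset.mem_image.mp hx
          have := ((hNvmem v u).mp hu).2
          rw [Finset.mem_range]; omega
        calc ((Nv v).image rk).card ≤ (Finset.range i).card := Finset.card_le_card hsub
          _ = i := Finset.card_range i
          _ ≤ k := hik
      · have hnc := (hbig v (by omega)).1
        rw [Finset.card_image_of_injective _ rk_inj]
        have : ((↑(Nv v) : Set V)).ncard = (Nv v).card := Set.ncard_coe_finset _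
        rw [hNvcoe v] at this
        omega
    · simp only [B']
      rw [dif_neg hi]
      simp
  let col : V → Fin (k+1) := fun v => greedy k B' (rk v)
  have hproper : ∀ u w, G.Adj u w → rk w < rk u → col w ≠ col u := by
    intro u w hadj hlt
    refine greedy_spec k B' hB'card (rk u) (rk w) ?_ hlt
    simp only [B', dif_pos (rk_lt u), hσrk u]
    exact Finset.mem_image_of_mem rk ((hNvmem u w).mpr ⟨hadj, hlt⟩)
  have hproper' : ∀ u w, G.Adj u w → col u ≠ col w := by
    intro u w hadj
    rcases lt_trichotomy (rk u) (rk w) with h1 | h1 | h1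
    · exact hproper w u hadj.symm h1
    · exact absurd (rk_inj h1) hadj.ne
    · exact fun he => hproper u w hadj h1 he.symm
  have hinj : ∀ v, ∀ a ∈ {u | G.Adj v u ∧ rk u < rk v}, ∀ b ∈ {u | G.Adj v u ∧ rk u < rk v},
      col a = col b → a = b := by
    intro v a ha b hb hcol
    by_contra hne
    exact hproper' a b (hclique v ha hb hne) hcol
  let H : Fin (k+1) → SimpleGraph V := fun c =>
    { Adj := fun u v => G.Adj u v ∧ ((rk v < rk u ∧ col v = c) ∨ (rk u < rk v ∧ col u = c)),
      symm := by
        refine ⟨fun u v hv => ?_⟩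
        refine ⟨hv.1.symm, ?_⟩
        tauto,
      loopless := ⟨fun v hv => G.loopless.irrefl v hv.1⟩ }
  have hHadj : ∀ c u v, (H c).Adj u v ↔
      (G.Adj u v ∧ ((rk v < rk u ∧ col v = c) ∨ (rk u < rk v ∧ col u = c))) := by
    intro c u v; rfl
  -- key: vertices of colour ≠ c have degree ≤ 1 in H c
  have key : ∀ (c : Fin (k+1)) v, col v ≠ c → ((H c).neighborSet v).ncard ≤ 1 := by
    intro c v hcv
    apply subsingleton_ncard_le_one
    intro a ha b hb
    have ha' : G.Adj v a ∧ rk a < rk v ∧ col a = c := by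
      rcases (hHadj c v a).mp ha with ⟨h1, ⟨h2, h3⟩ | ⟨h2, h3⟩⟩
      · exact ⟨h1, h2, h3⟩
      · exact absurd h3 hcv
    have hb' : G.Adj v b ∧ rk b < rk v ∧ col b = c := by
      rcases (hHadj c v b).mp hb with ⟨h1, ⟨h2, h3⟩ | ⟨h2, h3⟩⟩
      · exact ⟨h1, h2, h3⟩
      · exact absurd h3 hcv
    exact hinj v a ⟨ha'.1, ha'.2.1⟩ b ⟨hb'.1, hb'.2.1⟩ (ha'.2.2.trans hb'.2.2.symm)
  refine ⟨H, ?_, ?_, ?_⟩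
  · -- star forests
    intro c v hdeg u hadj
    have hcv : col v = c := by
      by_contra hne
      have := key c v hne
      omega
    have hcu : col u ≠ c := by
      intro hcu
      exact hproper' v u hadj.1 (hcv.trans hcu.symm)
    have h1 := key c u hcu
    have h2 : v ∈ (H c).neighborSet u := hadj.symm
    have h3 : 0 < ((H c).neighborSet u).ncard :=
      (Set.ncard_pos (Set.toFinite _)).mpr ⟨v, h2⟩
    omega
  · intro c u v huv
    exact huv.1
  · intro u v huv
    rcases lt_trichotomy (rk u) (rk v) with h1 | h1 | h1
    · refine ⟨col u, ⟨huv, Or.inr ⟨h1, rfl⟩⟩, ?_⟩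
      rintro c ⟨_, ⟨h2, h3⟩ | ⟨h2, h3⟩⟩
      · omega
      · exact h3.symm
    · exact absurd (rk_inj h1) huv.ne
    · refine ⟨col v, ⟨huv, Or.inl ⟨h1, rfl⟩⟩, ?_⟩
      rintro c ⟨_, ⟨h2, h3⟩ | ⟨h2, h3⟩⟩
      · exact h3.symm
      · omega
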